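/- Let Γ be a tree on the vertex set [m+1], and suppose for each edge {i,j} of Γ monomials u_{ij}, u_{ji} ∈ S = K[x_1,...,x_n] are given such that gcd(u_{i,b(i,j)}, u_{j,e(i,j)}) = 1 for all 1 ≤ i < j ≤ m+1. Then the monomials v_j = ∏_{i=1, i≠j}^{m+1} u_{i,b(i,j)}, j = 1,...,m+1, satisfy gcd(v_1, v_2, ..., v_{m+1}) = 1. -/

import Mathlib

open MvPolynomial

namespace CMCodim2

noncomputable section

/-- The total degree of an exponent vector (of a monomial). -/
def mdeg {σ : Type*} (a : σ →₀ ℕ) : ℕ := a.sum fun _ e => e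

/-- The height (codimension) of an ideal: the infimum of the heights of the
prime ideals containing it. -/
def idealHeight {R : Type*} [CommRing R] (I : Ideal R) : ℕ∞ :=
  ⨅ (p : PrimeSpectrum R) (_ : I ≤ p.asIdeal), Order.height p

/-- An ideal `I` of a polynomial ring is a Cohen–Macaulay ideal of codimension `2`
iff it has height `2` and `R/I` has a free resolution
`0 → R^a → R^b → R → R/I → 0` of length `2` (Auslander–Buchsbaum). -/
def IsCMCodim2 {R : Type*} [CommRing R] (I : Ideal R) : Prop :=
  idealHeight I = 2 ∧
    ∃ (a b : ℕ) (f : (Fin a → R) →ₗ[R] (Fin b → R)) (g : (Fin b → R) →ₗ[R] R),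
      Function.Injective f ∧ LinearMap.range f = LinearMap.ker g ∧
        LinearMap.range g = I

/-- The map `φ₁ : S^{m+1} → S`, `e_i ↦ u_i`, where `u_i` is the (monic) monomial
with exponent vector `d i`. -/
def phi (K : Type*) [Field K] {σ : Type*} (m : ℕ) (d : Fin (m + 1) → (σ →₀ ℕ)) :
    (Fin (m + 1) → MvPolynomial σ K) →ₗ[MvPolynomial σ K] MvPolynomial σ K where
  toFun v := ∑ i, v i * monomial (d i) 1
  map_add' x y := by simp [add_mul, Finset.sum_add_distrib]
  map_smul' c x := by simp [Finset.mul_sum, mul_assoc]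

/-- The Taylor relation `r_{ij} = u_{ji} e_j - u_{ij} e_i ∈ S^{m+1}` of the monomials
`u_i, u_j` with exponent vectors `d i, d j`; here `u_{ji} = u_i / gcd(u_i,u_j)`
has exponent vector `d i - d j` (truncated subtraction). -/
def taylorRel (K : Type*) [Field K] {σ : Type*} (m : ℕ) (d : Fin (m + 1) → (σ →₀ ℕ))
    (i j : Fin (m + 1)) : Fin (m + 1) → MvPolynomial σ K := fun k =>
  if k = j then monomial (d i - d j) 1
  else if k = i then -(monomial (d j - d i) 1) else 0

/-- `t` lists the `m` (unordered) pairs of indices of Taylor relations forming the rows of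
a Hilbert–Burch matrix of the ideal generated by the `m+1` monomials with exponent
vectors `d i`: the corresponding Taylor relations generate (hence, being `m` elements
generating the free rank-`m` module, minimally generate) the first syzygy module
`U = ker φ₁`. -/
def IsHB (K : Type*) [Field K] {σ : Type*} (m : ℕ) (d : Fin (m + 1) → (σ →₀ ℕ))
    (t : Fin m → Fin (m + 1) × Fin (m + 1)) : Prop :=
  (∀ k, (t k).1 ≠ (t k).2) ∧
    Submodule.span (MvPolynomial σ K)
        (Set.range fun k => taylorRel K m d (t k).1 (t k).2) =
      LinearMap.ker (phi K m d)

/-- The graph on `[m+1]` whose edges `{i,j}` are the pairs of columns in which the rows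
of a Hilbert–Burch matrix (given by the list `t` of pairs) have their nonzero entries. -/
def relGraph {m : ℕ} (t : Fin m → Fin (m + 1) × Fin (m + 1)) :
    SimpleGraph (Fin (m + 1)) :=
  SimpleGraph.fromRel fun i j => ∃ k, t k = (i, j)

/-- `T(I)`: the set of relation trees (graphs of Hilbert–Burch matrices) of the ideal
generated by the `m+1` monomials with exponent vectors `d i`. -/
def relTrees (K : Type*) [Field K] {σ : Type*} (m : ℕ) (d : Fin (m + 1) → (σ →₀ ℕ)) :
    Set (SimpleGraph (Fin (m + 1))) :=
  {Γ | ∃ t, IsHB K m d t ∧ relGraph t = Γ}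

/-- The Taylor graph `G(I)`: the union of all relation trees of `I`. -/
def taylorGraph (K : Type*) [Field K] {σ : Type*} (m : ℕ)
    (d : Fin (m + 1) → (σ →₀ ℕ)) : SimpleGraph (Fin (m + 1)) :=
  sSup (relTrees K m d)

/-- `I` is (the monomial ideal) minimally generated by the `m+1` monic monomials with
exponent vectors `d i`. -/
def MinGens (K : Type*) [Field K] {σ : Type*} (m : ℕ) (d : Fin (m + 1) → (σ →₀ ℕ))
    (I : Ideal (MvPolynomial σ K)) : Prop :=
  I = Ideal.span (Set.range fun i => (monomial (d i) 1 : MvPolynomial σ K)) ∧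
    ∀ j : Fin (m + 1), (monomial (d j) 1 : MvPolynomial σ K) ∉
      Ideal.span ((fun i => (monomial (d i) 1 : MvPolynomial σ K)) '' {i | i ≠ j})

/-- The ideal generated by the `m+1` monomials with exponent vectors `d i` has a linear
resolution: all generators have the same degree and all the entries of every
Hilbert–Burch matrix of `I` are linear forms (i.e. every Taylor relation occurring as a
row of a Hilbert–Burch matrix is linear). -/
def HasLinearRes (K : Type*) [Field K] {σ : Type*} (m : ℕ)
    (d : Fin (m + 1) → (σ →₀ ℕ)) : Prop :=
  (∃ c, ∀ i, mdeg (d i) = c) ∧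
    ∀ t, IsHB K m d t →
      ∀ k, mdeg (d (t k).1 - d (t k).2) = 1 ∧ mdeg (d (t k).2 - d (t k).1) = 1

/-- A graph is chordal if every cycle of length at least `4` has a chord, i.e. an edge
of the graph joining two vertices of the cycle which is not an edge of the cycle. -/
def IsChordal {V : Type*} (G : SimpleGraph V) : Prop :=
  ∀ ⦃v : V⦄ (w : G.Walk v v), w.IsCycle → 4 ≤ w.length →
    ∃ a b, a ∈ w.support ∧ b ∈ w.support ∧ G.Adj a b ∧ s(a, b) ∉ w.edges

/-- A maximal clique of a graph. -/
def IsMaxClique {V : Type*} (G : SimpleGraph V) (s : Set V) : Prop :=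
  G.IsClique s ∧ ∀ t : Set V, G.IsClique t → s ⊆ t → t = s

/-- `b` is the "path-begin" function of the tree `G`: for `i ≠ j`, `b i j` is the
first vertex after `i` on the unique path in `G` from `i` to `j` (equivalently, the
neighbour of `i` which is one step closer to `j`). -/
def PathBegin {V : Type*} (G : SimpleGraph V) (b : V → V → V) : Prop :=
  ∀ i j : V, i ≠ j → G.Adj i (b i j) ∧ G.dist (b i j) j + 1 = G.dist i j

/-- The index set of the `2m` indeterminates `x_{ij}`: ordered pairs `(i,j)` such that
`{i,j}` is an edge of `G`. -/
abbrev EdgeVar {N : ℕ} (G : SimpleGraph (Fin N)) : Type :=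
  {p : Fin N × Fin N // G.Adj p.1 p.2}

/-- `ε` enumerates the edges of `G` (each unordered edge appearing exactly once). -/
def EdgeEnum {m : ℕ} (G : SimpleGraph (Fin (m + 1)))
    (ε : Fin m → Fin (m + 1) × Fin (m + 1)) : Prop :=
  ∀ i j : Fin (m + 1), G.Adj i j → ∃! k, ε k = (i, j) ∨ ε k = (j, i)

/-- The generic matrix `A(Γ)` attached to the tree `G` with edges enumerated by `ε`:
the `k`-th row, for the `k`-th edge `{i,j}`, has entry `-x_{ij}` in column `i`,
entry `x_{ji}` in column `j` and `0` elsewhere. -/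
def genMat (K : Type*) [Field K] {m : ℕ} (G : SimpleGraph (Fin (m + 1)))
    (ε : Fin m → Fin (m + 1) × Fin (m + 1)) (hε : ∀ k, G.Adj (ε k).1 (ε k).2) :
    Matrix (Fin m) (Fin (m + 1)) (MvPolynomial (EdgeVar G) K) := fun k l =>
  if l = (ε k).1 then -(X ⟨ε k, hε k⟩)
  else if l = (ε k).2 then X ⟨((ε k).2, (ε k).1), (hε k).symm⟩
  else 0

/-- `v_j`: the maximal minor of the generic matrix `A(Γ)` obtained by omitting the
`j`-th column. -/
def genMinor (K : Type*) [Field K] {m : ℕ} (G : SimpleGraph (Fin (m + 1)))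
    (ε : Fin m → Fin (m + 1) × Fin (m + 1)) (hε : ∀ k, G.Adj (ε k).1 (ε k).2)
    (j : Fin (m + 1)) : MvPolynomial (EdgeVar G) K :=
  ((genMat K G ε hε).submatrix id j.succAbove).det

/-- The monomial `∏_{i ≠ j} x_{i, b(i,j)}`. -/
def genV (K : Type*) [Field K] {m : ℕ} (G : SimpleGraph (Fin (m + 1)))
    (b : Fin (m + 1) → Fin (m + 1) → Fin (m + 1))
    (hb : ∀ i j : Fin (m + 1), i ≠ j → G.Adj i (b i j)) (j : Fin (m + 1)) :
    MvPolynomial (EdgeVar G) K :=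
  ∏ i, if h : i = j then 1 else X ⟨(i, b i j), hb i j h⟩

/-- The exponent vector of the monomial `∏_{i ≠ j} x_{i, b(i,j)}`. -/
def genD {m : ℕ} (G : SimpleGraph (Fin (m + 1)))
    (b : Fin (m + 1) → Fin (m + 1) → Fin (m + 1))
    (hb : ∀ i j : Fin (m + 1), i ≠ j → G.Adj i (b i j)) (j : Fin (m + 1)) :
    EdgeVar G →₀ ℕ :=
  ∑ i, if h : i = j then 0 else Finsupp.single ⟨(i, b i j), hb i j h⟩ 1

end

end CMCodim2


namespace CMCodim2

namespace Stmt5Aux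

set_option linter.unusedSectionVars false


open SimpleGraph Walk

variable {V : Type*} [DecidableEq V] {G : SimpleGraph V} {b : V → V → V}

lemma path_length_eq (hG : G.IsTree) {u v : V} (p : G.Walk u v) (hp : p.IsPath) :
    p.length = G.dist u v := by
  obtain ⟨q, hq, hql⟩ := hG.isConnected.exists_path_of_dist u v
  rw [(hG.existsUnique_path u v).unique hp hq]
  exact hql

lemma b_eq (hG : G.IsTree) (hb : PathBegin G b) {i j : V} (hij : i ≠ j)
    (p : G.Walk i j) (hp : p.IsPath) : p.getVert 1 = b i j := by
  obtain ⟨hadj, hdist⟩ := hb i j hij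
  obtain ⟨q, hq, hql⟩ := hG.isConnected.exists_path_of_dist (b i j) j
  have hi : i ∉ q.support := by
    intro hmem
    have h1 : G.dist i j ≤ (q.dropUntil i hmem).length := G.dist_le _
    have h2 : (q.dropUntil i hmem).length ≤ q.length := q.length_dropUntil_le hmem
    omega
  have hcons : (Walk.cons hadj q).IsPath := hq.cons hi
  rw [(hG.existsUnique_path i j).unique hp hcons]
  simp [Walk.getVert_cons_succ, Walk.getVert_zero]

lemma b_mem_support (hG : G.IsTree) (hb : PathBegin G b) {u z y : V} (huz : u ≠ z)
    (p : G.Walk u z) (hp : p.IsPath) (hy : y ∈ p.support) (hyu : y ≠ u) :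
    b u y = b u z := by
  cases p with
  | nil => exact absurd rfl huz
  | @cons _ k _ h q =>
    rw [Walk.cons_isPath_iff] at hp
    have hyq : y ∈ q.support := by
      rw [Walk.support_cons] at hy
      rcases List.mem_cons.mp hy with h' | h'
      · exact absurd h' hyu
      · exact h'
    set t := q.takeUntil y hyq with ht_def
    have ht : t.IsPath := hp.1.takeUntil hyq
    have hut : u ∉ t.support := fun hm => hp.2 (q.support_takeUntil_subset hyq hm)
    have hpath : (Walk.cons h t).IsPath := ht.cons hut
    have e1 : (Walk.cons h t).getVert 1 = b u y := b_eq hG hb hyu.symm _ hpath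
    have e2 : (Walk.cons h q).getVert 1 = b u z := b_eq hG hb huz _ (by
      rw [Walk.cons_isPath_iff]; exact hp)
    simp only [Walk.getVert_cons_succ, Walk.getVert_zero] at e1 e2
    rw [← e1, ← e2]

lemma isPath_append {u v w : V} {p : G.Walk u v} {q : G.Walk v w}
    (hp : p.IsPath) (hq : q.IsPath)
    (h : ∀ y, y ∈ p.support → y ∈ q.support → y = v) : (p.append q).IsPath := by
  rw [Walk.isPath_def, Walk.support_append, List.nodup_append]
  refine ⟨hp.support_nodup, hq.support_nodup.tail, ?_⟩
  intro a hap c haq hac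
  subst hac
  have haq' : a ∈ q.support := List.mem_of_mem_tail haq
  have : a = v := h a hap haq'
  subst this
  have : q.support = a :: q.support.tail := q.support_eq_cons
  have hnd := hq.support_nodup
  rw [this] at hnd
  exact (List.nodup_cons.mp hnd).1 haq

lemma b_diverge (hG : G.IsTree) (hb : PathBegin G b) {i j x : V} (hij : i ≠ j)
    (hxi : x ≠ i) (hxj : x ≠ j) (hbb : b j x ≠ b j i) : b i x = b i j := by
  obtain ⟨q1, hq1, -⟩ := hG.isConnected.exists_path_of_dist j i
  obtain ⟨q2, hq2, -⟩ := hG.isConnected.exists_path_of_dist j x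
  have hint : ∀ y, y ∈ q1.support → y ∈ q2.support → y = j := by
    intro y h1 h2
    by_contra hyj
    have e1 : b j y = b j i := b_mem_support hG hb (Ne.symm hij) q1 hq1 h1 hyj
    have e2 : b j y = b j x := b_mem_support hG hb (Ne.symm hxj) q2 hq2 h2 hyj
    exact hbb (e2 ▸ e1 ▸ rfl)
  have hr : q1.reverse.IsPath := hq1.reverse
  have happ : (q1.reverse.append q2).IsPath := by
    refine isPath_append hr hq2 (fun y h1 h2 => hint y ?_ h2)
    rwa [Walk.support_reverse, List.mem_reverse] at h1
  obtain ⟨k, hadj, r, hre⟩ := Walk.exists_eq_cons_of_ne hij q1.reverse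
  have e3 : b i j = k := by
    have := b_eq hG hb hij q1.reverse hr
    rw [hre] at this
    simpa [Walk.getVert_cons_succ, Walk.getVert_zero] using this.symm
  have e4 : b i x = k := by
    have := b_eq hG hb hxi.symm (q1.reverse.append q2) happ
    rw [hre, Walk.cons_append] at this
    simpa [Walk.getVert_cons_succ, Walk.getVert_zero] using this.symm
  rw [e3, e4]

section Comb

variable [Fintype V]

/-- The set of vertices `x` such that the path from `i` to `x` does not start with `k`. -/
def SS (b : V → V → V) (i k : V) : Finset V :=
  Finset.univ.filter (fun x => x = i ∨ b i x ≠ k)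

lemma SS_subset (hG : G.IsTree) (hb : PathBegin G b) {i i2 k : V}
    (h12 : i2 ≠ i) (hk : b i i2 ≠ k) :
    SS b i2 (b i2 i) ⊆ (SS b i k).erase i := by
  intro x hx
  simp only [SS, Finset.mem_filter, Finset.mem_univ, true_and] at hx
  have hxi : x ≠ i := by
    rintro rfl
    rcases hx with rfl | h
    · exact h12 rfl
    · exact h rfl
  rw [Finset.mem_erase]
  refine ⟨hxi, ?_⟩
  simp only [SS, Finset.mem_filter, Finset.mem_univ, true_and]
  refine Or.inr ?_
  by_cases hxi2 : x = i2
  · subst hxi2; exact hk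
  · rcases hx with rfl | h
    · exact hk
    · have := b_diverge hG hb (Ne.symm h12) hxi hxi2 h
      rw [this]; exact hk

lemma comb [Nonempty V] (hG : G.IsTree) (hb : PathBegin G b) (c : V → V → ℕ)
    (hasym : ∀ i j, i ≠ j → c i (b i j) = 0 ∨ c j (b j i) = 0) :
    ∃ j, ∀ i, i ≠ j → c i (b i j) = 0 := by
  by_contra hcon
  push_neg at hcon
  have key : ∀ N : ℕ, ∀ i j0 : V, i ≠ j0 → c i (b i j0) ≠ 0 →
      (SS b i (b i j0)).card ≤ N → False := by
    intro N
    induction N with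
    | zero =>
      intro i j0 _ _ hcard
      have hmem : i ∈ SS b i (b i j0) := by
        simp [SS]
      have := Finset.card_pos.mpr ⟨i, hmem⟩
      omega
    | succ N ih =>
      intro i j0 hij hc hcard
      obtain ⟨i2, h2i, hc2⟩ := hcon i
      have h0 : c i (b i i2) = 0 := by
        rcases hasym i i2 (Ne.symm h2i) with h | h
        · exact h
        · exact absurd h hc2
      have hbi : b i i2 ≠ b i j0 := fun he => hc (he ▸ h0)
      have hsub := SS_subset hG hb h2i hbi
      have h1 := Finset.card_le_card hsub
      have h2 : ((SS b i (b i j0)).erase i).card < (SS b i (b i j0)).card :=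
        Finset.card_erase_lt_of_mem (by simp [SS])
      exact ih i2 i h2i hc2 (by omega)
  obtain ⟨j⟩ := ‹Nonempty V›
  obtain ⟨i, hij, hc⟩ := hcon j
  exact key _ i j hij hc le_rfl

end Comb



variable {K : Type*} [Field K] {σ : Type*}

lemma prime_X (s : σ) : Prime (X s : MvPolynomial σ K) := by
  classical
  set f : σ → MvPolynomial σ K := fun t => if t = s then 0 else X t with hf
  have key : ∀ p : MvPolynomial σ K, X s ∣ (p - aeval f p) := by
    intro p
    induction p using MvPolynomial.induction_on with
    | C a => simp
    | add p q hp hq =>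
      have := dvd_add hp hq
      have he : p + q - aeval f (p + q) = (p - aeval f p) + (q - aeval f q) := by
        rw [map_add]; ring
      rwa [he]
    | mul_X p t hp =>
      by_cases ht : t = s
      · have : aeval f (p * X t) = 0 := by simp [hf, ht]
        rw [this, sub_zero, ht]
        exact Dvd.intro_left p rfl
      · have h1 : aeval f (p * X t) = aeval f p * X t := by simp [hf, ht]
        have he : p * X t - aeval f (p * X t) = (p - aeval f p) * X t := by
          rw [h1]; ring
        rw [he]
        exact hp.mul_right _
  have hker : ∀ p : MvPolynomial σ K, X s ∣ p ↔ aeval f p = 0 := by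
    intro p
    constructor
    · rintro ⟨q, rfl⟩
      simp [hf]
    · intro h0
      have := key p
      rwa [h0, sub_zero] at this
  refine ⟨X_ne_zero s, ?_, ?_⟩
  · intro hu
    have := hu.map (aeval f (R := K))
    have hx : aeval f (X s : MvPolynomial σ K) = 0 := by simp [hf]
    rw [hx] at this
    exact not_isUnit_zero this
  · intro p q hpq
    rw [hker, hker]
    rw [hker] at hpq
    rw [map_mul] at hpq
    exact mul_eq_zero.mp hpq

lemma monomial_eq_X_mul {a : σ →₀ ℕ} {s : σ} (h : a s ≠ 0) :
    (monomial a (1 : K)) = X s * monomial (a - Finsupp.single s 1) 1 := by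
  have hle : Finsupp.single s 1 ≤ a := by
    rw [Finsupp.single_le_iff]; omega
  rw [X, monomial_mul, one_mul, add_tsub_cancel_of_le hle]

lemma mdeg_sub_single {a : σ →₀ ℕ} {s : σ} (h : a s ≠ 0) :
    mdeg (a - Finsupp.single s 1) + 1 = mdeg a := by
  classical
  have hle : Finsupp.single s 1 ≤ a := by
    rw [Finsupp.single_le_iff]; omega
  have hsplit : a - Finsupp.single s 1 + Finsupp.single s 1 = a :=
    tsub_add_cancel_of_le hle
  have hadd : ∀ x y : σ →₀ ℕ, mdeg (x + y) = mdeg x + mdeg y := by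
    intro x y
    unfold mdeg
    exact Finsupp.sum_add_index' (fun _ => rfl) (fun _ _ _ => rfl)
  have hsingle : mdeg (Finsupp.single s 1) = 1 := by
    unfold mdeg
    rw [Finsupp.sum_single_index rfl]
  conv_rhs => rw [← hsplit]
  rw [hadd, hsingle]

lemma dvd_monomial_one :
    ∀ (n : ℕ) (a : σ →₀ ℕ), mdeg a ≤ n → ∀ p : MvPolynomial σ K, p ∣ monomial a 1 →
      ∃ e : σ →₀ ℕ, e ≤ a ∧ monomial e (1 : K) ∣ p ∧ p ∣ monomial e 1 := by
  classical
  intro n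
  induction n with
  | zero =>
    intro a ha p hp
    have ha0 : a = 0 := by
      ext s
      by_contra h
      have h1 := mdeg_sub_single (a := a) (s := s) h
      omega
    subst ha0
    refine ⟨0, le_rfl, ?_, ?_⟩
    · simp [monomial_zero']
    · simpa [monomial_zero'] using hp
  | succ n ih =>
    intro a ha p hp
    by_cases ha0 : a = 0
    · subst ha0
      refine ⟨0, le_rfl, by simp [monomial_zero'], by simpa [monomial_zero'] using hp⟩
    · obtain ⟨s, hs⟩ : ∃ s, a s ≠ 0 := by
        by_contra h
        push_neg at h
        exact ha0 (Finsupp.ext h)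
      set a' := a - Finsupp.single s 1 with ha'
      have hsplit : monomial a (1 : K) = X s * monomial a' 1 := monomial_eq_X_mul hs
      have hdeg : mdeg a' ≤ n := by
        have := mdeg_sub_single (a := a) (s := s) hs
        rw [ha']
        omega
      have ha'le : a' ≤ a := tsub_le_self
      obtain ⟨q, hq⟩ := hp
      rcases (prime_X (K := K) s).2.2 p q (by rw [← hq, hsplit]; exact Dvd.intro _ rfl) with hxp | hxq
      · obtain ⟨p', rfl⟩ := hxp
        have hcan : p' * q = monomial a' 1 := by
          have hx0 : (X s : MvPolynomial σ K) ≠ 0 := X_ne_zero s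
          apply mul_left_cancel₀ hx0
          rw [← mul_assoc, ← hq, hsplit]
        obtain ⟨e, he, h1, h2⟩ := ih a' hdeg p' ⟨q, hcan.symm⟩
        have hle : Finsupp.single s 1 ≤ a := by
          rw [Finsupp.single_le_iff]; omega
        refine ⟨e + Finsupp.single s 1, ?_, ?_, ?_⟩
        · calc e + Finsupp.single s 1 ≤ a' + Finsupp.single s 1 := by gcongr
            _ = a := tsub_add_cancel_of_le hle
        · rw [show monomial (e + Finsupp.single s 1) (1 : K) = X s * monomial e 1 by
            rw [X, monomial_mul, one_mul, add_comm]]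
          exact mul_dvd_mul_left _ h1
        · rw [show monomial (e + Finsupp.single s 1) (1 : K) = X s * monomial e 1 by
            rw [X, monomial_mul, one_mul, add_comm]]
          exact mul_dvd_mul_left _ h2
      · obtain ⟨q', rfl⟩ := hxq
        have hcan : p * q' = monomial a' 1 := by
          have hx0 : (X s : MvPolynomial σ K) ≠ 0 := X_ne_zero s
          apply mul_left_cancel₀ hx0
          rw [show X s * (p * q') = p * (X s * q') by ring, ← hq, hsplit]
        obtain ⟨e, he, h1, h2⟩ := ih a' hdeg p ⟨q', hcan.symm⟩
        exact ⟨e, le_trans he ha'le, h1, h2⟩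

lemma prod_monomial_one {ι : Type*} (s : Finset ι) (f : ι → (σ →₀ ℕ)) :
    ∏ i ∈ s, monomial (f i) (1 : K) = monomial (∑ i ∈ s, f i) 1 := by
  classical
  induction s using Finset.induction with
  | empty => simp [monomial_zero']
  | insert _ _ h ih =>
    rw [Finset.prod_insert h, Finset.sum_insert h, ih, monomial_mul, one_mul]

lemma isRelPrime_exponent {a c : σ →₀ ℕ}
    (h : IsRelPrime (monomial a (1 : K)) (monomial c 1)) (s : σ) :
    a s = 0 ∨ c s = 0 := by
  by_contra hcon
  push_neg at hcon
  have h1 : (X s : MvPolynomial σ K) ∣ monomial a 1 := X_dvd_monomial.mpr (Or.inr hcon.1)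
  have h2 : (X s : MvPolynomial σ K) ∣ monomial c 1 := X_dvd_monomial.mpr (Or.inr hcon.2)
  exact (prime_X (K := K) s).2.1 (h h1 h2)


end Stmt5Aux

end CMCodim2

open CMCodim2 MvPolynomial
/-- Let `Γ` be a tree on the vertex set `[m+1]`, and suppose for each
edge `{i,j}` of `Γ` monomials `u_{ij}, u_{ji} ∈ S = K[x_1,...,x_n]` (encoded by their
exponent vectors) are given such that `gcd(u_{i,b(i,j)}, u_{j,e(i,j)}) = 1` for all
`i < j`. Then the monomials `v_j = ∏_{i ≠ j} u_{i,b(i,j)}` satisfy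
`gcd(v_1,...,v_{m+1}) = 1`, i.e. every common divisor of all the `v_j` is a unit. -/
theorem statement5 (K : Type*) [Field K] {n m : ℕ}
    (Γ : SimpleGraph (Fin (m + 1))) (hΓ : Γ.IsTree)
    (b : Fin (m + 1) → Fin (m + 1) → Fin (m + 1)) (hb : PathBegin Γ b)
    (w : Fin (m + 1) → Fin (m + 1) → (Fin n →₀ ℕ))
    (hgcd : ∀ i j : Fin (m + 1), i < j →
      IsRelPrime (monomial (w i (b i j)) 1 : MvPolynomial (Fin n) K)
        (monomial (w j (b j i)) 1)) :
    ∀ p : MvPolynomial (Fin n) K,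
      (∀ j : Fin (m + 1),
        p ∣ ∏ i, if i = j then 1 else (monomial (w i (b i j)) 1 : MvPolynomial (Fin n) K)) →
      IsUnit p := by
  intro p hdvd
  classical
  set D : Fin (m + 1) → (Fin n →₀ ℕ) := fun j => ∑ i, if i = j then 0 else w i (b i j) with hD
  have hprod : ∀ j, (∏ i, if i = j then 1
      else (monomial (w i (b i j)) 1 : MvPolynomial (Fin n) K)) = monomial (D j) 1 := by
    intro j
    rw [hD, ← Stmt5Aux.prod_monomial_one]
    apply Finset.prod_congr rfl
    intro i _
    split_ifs with h
    · simp [monomial_zero']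
    · rfl
  have hdvd' : ∀ j, p ∣ monomial (D j) 1 := fun j => hprod j ▸ hdvd j
  obtain ⟨e, he0, h1, h2⟩ :=
    Stmt5Aux.dvd_monomial_one (mdeg (D 0)) (D 0) le_rfl p (hdvd' 0)
  have heall : ∀ j, e ≤ D j := fun j =>
    monomial_one_dvd_monomial_one.mp (dvd_trans h1 (hdvd' j))
  have hes : ∀ s, e s = 0 := by
    intro s
    have hasym : ∀ i j : Fin (m + 1), i ≠ j →
        (fun i k => w i k s) i (b i j) = 0 ∨ (fun i k => w i k s) j (b j i) = 0 := by
      intro i j hij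
      rcases lt_or_gt_of_ne hij with h | h
      · rcases Stmt5Aux.isRelPrime_exponent (hgcd i j h) s with h0 | h0
        · exact Or.inl h0
        · exact Or.inr h0
      · rcases Stmt5Aux.isRelPrime_exponent (hgcd j i h) s with h0 | h0
        · exact Or.inr h0
        · exact Or.inl h0
    obtain ⟨j, hj⟩ := Stmt5Aux.comb hΓ hb (fun i k => w i k s) hasym
    have hle : e s ≤ D j s := Finsupp.le_def.mp (heall j) s
    have hzero : D j s = 0 := by
      rw [hD]
      simp only [Finsupp.finset_sum_apply]
      apply Finset.sum_eq_zero
      intro i _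
      split_ifs with h
      · simp
      · exact hj i h
    omega
  have he : e = 0 := Finsupp.ext hes
  rw [he] at h2
  exact isUnit_of_dvd_one (by simpa [monomial_zero'] using h2)
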